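/- Let F_e : 2^V → ℝ_+ (e ∈ E) be nonnegative submodular functions with F_e(∅) = F_e(V) = 0, with Lovász extensions f_e, and let b ∈ ℝ^V. If x* minimizes the convex function x ↦ (1/2) Σ_{e∈E} f_e(x)^2 − ⟨b, x⟩ over ℝ^V, then there exist w_e ∈ ∂f_e(x*) = argmax_{w ∈ B(F_e)} ⟨x*, w⟩ for each e ∈ E such that Σ_{e∈E} f_e(x*) · w_e = b. In other words, b lies in the image L_F(x*) of the submodular Laplacian. -/
import Mathlib


open scoped BigOperators
open Filter Topology

/-- A minimizer `x*` of `(1/2) Σ_e f_e(x)² − ⟨b,x⟩` satisfies `b ∈ L_F(x*)`: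
there exist `w_e ∈ ∂f_e(x*) = argmax_{w ∈ B(F_e)} ⟨x*,w⟩` with
`Σ_e f_e(x*) · w_e = b`. -/
theorem minimizer_solves_laplacian {V E : Type*} [Fintype V] [DecidableEq V] [Fintype E]
    (F : E → Finset V → ℝ)
    (hsub : ∀ e (S T : Finset V), F e (S ∪ T) + F e (S ∩ T) ≤ F e S + F e T)
    (hnn : ∀ e S, 0 ≤ F e S)
    (h0 : ∀ e, F e ∅ = 0) (hV : ∀ e, F e Finset.univ = 0)
    (f : E → (V → ℝ) → ℝ)
    (hf : ∀ e (x : V → ℝ), IsGreatest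
      {r : ℝ | ∃ w : V → ℝ,
        ((∀ S : Finset V, ∑ v ∈ S, w v ≤ F e S) ∧ ∑ v, w v = F e Finset.univ)
        ∧ r = ∑ v, x v * w v} (f e x))
    (b : V → ℝ) (xs : V → ℝ)
    (hmin : ∀ x : V → ℝ,
      2⁻¹ * (∑ e, (f e xs) ^ 2) - ∑ v, b v * xs v ≤
      2⁻¹ * (∑ e, (f e x) ^ 2) - ∑ v, b v * x v) :
    ∃ w : E → V → ℝ,
      (∀ e, ((∀ S : Finset V, ∑ v ∈ S, w e v ≤ F e S) ∧ ∑ v, w e v = F e Finset.univ)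
        ∧ ∑ v, xs v * w e v = f e xs) ∧
      (∀ v, ∑ e, f e xs * w e v = b v) := by
  classical
  set B : E → Set (V → ℝ) := fun e =>
    {w | (∀ S : Finset V, ∑ v ∈ S, w v ≤ F e S) ∧ ∑ v, w v = F e Finset.univ} with hBdef
  -- basic facts about f
  have hub : ∀ e (x w : V → ℝ), w ∈ B e → ∑ v, x v * w v ≤ f e x := by
    intro e x w hw
    exact (hf e x).2 ⟨w, hw, rfl⟩
  have hex : ∀ e (x : V → ℝ), ∃ w, w ∈ B e ∧ f e x = ∑ v, x v * w v := by
    intro e x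
    obtain ⟨w, hw, hr⟩ := (hf e x).1
    exact ⟨w, hw, hr⟩
  have hzero : ∀ e, (0 : V → ℝ) ∈ B e := by
    intro e
    refine ⟨fun S => ?_, ?_⟩
    · simpa using hnn e S
    · simpa using (hV e).symm
  have hfnn : ∀ e (x : V → ℝ), 0 ≤ f e x := by
    intro e x
    simpa using hub e x 0 (hzero e)
  -- boundedness of B e
  set Me : E → ℝ := fun e => (∑ v, F e {v}) + ∑ v, F e (Finset.univ.erase v) with hMe
  have hBsub : ∀ e, B e ⊆ Set.pi Set.univ (fun _ : V => Set.Icc (-(Me e)) (Me e)) := by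
    intro e w hw v _
    have hup : w v ≤ F e {v} := by
      have := hw.1 {v}
      simpa using this
    have hlow : -(F e (Finset.univ.erase v)) ≤ w v := by
      have hsum : ∑ u ∈ Finset.univ.erase v, w u + w v = ∑ u, w u :=
        Finset.sum_erase_add _ _ (Finset.mem_univ v)
      have h1 : ∑ u ∈ Finset.univ.erase v, w u ≤ F e (Finset.univ.erase v) := hw.1 _
      have h2 : ∑ u, w u = 0 := by rw [hw.2, hV]
      linarith
    have hnn1 : 0 ≤ ∑ v, F e {v} := Finset.sum_nonneg fun v _ => hnn e _
    have hnn2 : 0 ≤ ∑ v, F e (Finset.univ.erase v) := Finset.sum_nonneg fun v _ => hnn e _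
    have hb1 : F e {v} ≤ ∑ v, F e {v} :=
      Finset.single_le_sum (fun v _ => hnn e _) (Finset.mem_univ v)
    have hb2 : F e (Finset.univ.erase v) ≤ ∑ v, F e (Finset.univ.erase v) :=
      Finset.single_le_sum (fun v _ => hnn e _) (Finset.mem_univ v)
    constructor
    · simp only [hMe]; linarith
    · simp only [hMe]; linarith
  have hcontS : ∀ (S : Finset V), Continuous (fun w : V → ℝ => ∑ v ∈ S, w v) :=
    fun S => continuous_finset_sum S (fun v _ => continuous_apply v)
  have hcontx : ∀ (x : V → ℝ), Continuous (fun w : V → ℝ => ∑ v, x v * w v) :=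
    fun x => continuous_finset_sum _ (fun v _ => continuous_const.mul (continuous_apply v))
  have hBclosed : ∀ e, IsClosed (B e) := by
    intro e
    have hEq : B e = (⋂ S : Finset V, {w : V → ℝ | ∑ v ∈ S, w v ≤ F e S}) ∩
        {w : V → ℝ | ∑ v, w v = F e Finset.univ} := by
      ext w
      simp only [hBdef, Set.mem_setOf_eq, Set.mem_inter_iff, Set.mem_iInter]
    rw [hEq]
    exact (isClosed_iInter fun S => isClosed_le (hcontS S) continuous_const).inter
      (isClosed_eq (hcontS _) continuous_const)
  have hBcompact : ∀ e, IsCompact (B e) :=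
    fun e => (isCompact_univ_pi fun _ => isCompact_Icc).of_isClosed_subset (hBclosed e) (hBsub e)
  -- the argmax sets
  set A : E → Set (V → ℝ) := fun e => {w | w ∈ B e ∧ ∑ v, xs v * w v = f e xs} with hAdef
  have hAne : ∀ e, (A e).Nonempty := by
    intro e
    obtain ⟨w, hw, hr⟩ := hex e xs
    exact ⟨w, hw, hr.symm⟩
  have hAconv : ∀ e, Convex ℝ (A e) := by
    intro e w1 hw1 w2 hw2 a c ha hc hac
    refine ⟨⟨fun S => ?_, ?_⟩, ?_⟩
    · have h1 := hw1.1.1 S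
      have h2 := hw2.1.1 S
      simp only [Pi.add_apply, Pi.smul_apply, smul_eq_mul]
      rw [Finset.sum_add_distrib, ← Finset.mul_sum, ← Finset.mul_sum]
      nlinarith [hnn e S]
    · have h1 := hw1.1.2
      have h2 := hw2.1.2
      simp only [Pi.add_apply, Pi.smul_apply, smul_eq_mul]
      rw [Finset.sum_add_distrib, ← Finset.mul_sum, ← Finset.mul_sum, h1, h2,
        ← add_mul, hac, one_mul]
    · have h1 := hw1.2
      have h2 := hw2.2
      simp only [Pi.add_apply, Pi.smul_apply, smul_eq_mul, mul_add]
      rw [Finset.sum_add_distrib]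
      have e1 : ∑ v, xs v * (a * w1 v) = a * ∑ v, xs v * w1 v := by
        rw [Finset.mul_sum]; exact Finset.sum_congr rfl fun v _ => by ring
      have e2 : ∑ v, xs v * (c * w2 v) = c * ∑ v, xs v * w2 v := by
        rw [Finset.mul_sum]; exact Finset.sum_congr rfl fun v _ => by ring
      rw [e1, e2, h1, h2, ← add_mul, hac, one_mul]
  have hAclosed : ∀ e, IsClosed (A e) :=
    fun e => (hBclosed e).inter (isClosed_eq (hcontx xs) continuous_const)
  have hAcompact : ∀ e, IsCompact (A e) :=
    fun e => (hBcompact e).of_isClosed_subset (hAclosed e) (fun w hw => hw.1)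
  -- the image set K
  set τ : (E → V → ℝ) → (V → ℝ) := fun w v => ∑ e, f e xs * w e v with hτdef
  have hτlin : IsLinearMap ℝ τ := by
    constructor
    · intro w1 w2
      funext v
      simp only [hτdef, Pi.add_apply, mul_add, Finset.sum_add_distrib]
    · intro c w
      funext v
      simp only [hτdef, Pi.smul_apply, smul_eq_mul, Finset.mul_sum]
      exact Finset.sum_congr rfl fun e _ => by ring
  have hτcont : Continuous τ := by
    refine continuous_pi fun v => continuous_finset_sum _ fun e _ => ?_
    exact continuous_const.mul ((continuous_apply v).comp (continuous_apply e))
  set K : Set (V → ℝ) := τ '' (Set.pi Set.univ A) with hKdef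
  have hKcompact : IsCompact K :=
    ((isCompact_univ_pi hAcompact).image hτcont)
  have hKconv : Convex ℝ K := (convex_pi fun e _ => hAconv e).is_linear_image hτlin
  -- main claim : b ∈ K
  have hbK : b ∈ K := by
    by_contra hbK
    obtain ⟨φ, u, hKu, hbu⟩ :=
      geometric_hahn_banach_closed_point (E := V → ℝ) hKconv hKcompact.isClosed hbK
    set d : V → ℝ := fun v => φ ((Pi.single v (1 : ℝ) : V → ℝ)) with hddef
    have hrep : ∀ x : V → ℝ, φ x = ∑ v, x v * d v := by
      intro x
      conv_lhs => rw [← Finset.univ_sum_single x]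
      rw [map_sum]
      refine Finset.sum_congr rfl fun v _ => ?_
      have hsingle : (Pi.single v (x v) : V → ℝ) = x v • (Pi.single v (1 : ℝ) : V → ℝ) := by
        funext u
        by_cases h : u = v <;> simp [Pi.single_apply, h]
      rw [hsingle, map_smul, smul_eq_mul, hddef]
    -- sequence of maximizers
    set t : ℕ → ℝ := fun n => 1 / (n + 1 : ℝ) with htdef
    have htpos : ∀ n, 0 < t n := fun n => by positivity
    set xn : ℕ → V → ℝ := fun n v => xs v + t n * d v with hxndef
    choose wseq hwseqB hwseqf using fun (n : ℕ) (e : E) => hex e (xn n)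
    obtain ⟨wl, hwl, ψ, hψ, hten⟩ :=
      (isCompact_univ_pi hBcompact).tendsto_subseq
        (x := wseq) (fun n => by intro e _; exact hwseqB n e)
    -- notation for pairings
    set q : ℕ → E → ℝ := fun n e => ∑ v, d v * wseq n e v with hqdef
    set Q : E → ℝ := fun e => ∑ v, d v * wl e v with hQdef
    have htenq : ∀ e, Tendsto (fun k => q (ψ k) e) atTop (𝓝 (Q e)) := by
      intro e
      have hc : Continuous (fun w : E → V → ℝ => ∑ v, d v * w e v) :=
        continuous_finset_sum _ fun v _ =>
          continuous_const.mul ((continuous_apply v).comp (continuous_apply e))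
      exact (hc.tendsto wl).comp hten
    have htenxs : ∀ e, Tendsto (fun k => ∑ v, xs v * wseq (ψ k) e v) atTop
        (𝓝 (∑ v, xs v * wl e v)) := by
      intro e
      have hc : Continuous (fun w : E → V → ℝ => ∑ v, xs v * w e v) :=
        continuous_finset_sum _ fun v _ =>
          continuous_const.mul ((continuous_apply v).comp (continuous_apply e))
      exact (hc.tendsto wl).comp hten
    have htent : Tendsto (fun k => t (ψ k)) atTop (𝓝 0) :=
      tendsto_one_div_add_atTop_nhds_zero_nat.comp hψ.tendsto_atTop
    -- decomposition of the pairing with xn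
    have hdecomp : ∀ (n : ℕ) (w : V → ℝ),
        ∑ v, xn n v * w v = (∑ v, xs v * w v) + t n * ∑ v, d v * w v := by
      intro n w
      rw [Finset.mul_sum, ← Finset.sum_add_distrib]
      refine Finset.sum_congr rfl fun v _ => ?_
      simp only [hxndef]; ring
    -- key inequality
    have hkey : ∀ n, ∑ v, b v * d v ≤
        (∑ e, f e xs * q n e) + t n / 2 * ∑ e, (q n e) ^ 2 := by
      intro n
      have hm := hmin (xn n)
      have hbxn : ∑ v, b v * xn n v = (∑ v, b v * xs v) + t n * ∑ v, b v * d v := by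
        rw [Finset.mul_sum, ← Finset.sum_add_distrib]
        refine Finset.sum_congr rfl fun v _ => ?_
        simp only [hxndef]; ring
      have hsq : ∀ e, (f e (xn n)) ^ 2 ≤ (f e xs + t n * q n e) ^ 2 := by
        intro e
        have h1 : f e (xn n) ≤ f e xs + t n * q n e := by
          have := hwseqf n e
          rw [this, hdecomp n (wseq n e)]
          have h2 : ∑ v, xs v * wseq n e v ≤ f e xs := hub e xs _ (hwseqB n e)
          simp only [hqdef]
          linarith
        exact pow_le_pow_left₀ (hfnn e _) h1 2
      have hsum : ∑ e, (f e (xn n)) ^ 2 ≤ ∑ e, (f e xs + t n * q n e) ^ 2 :=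
        Finset.sum_le_sum fun e _ => hsq e
      have hexpand : ∑ e, (f e xs + t n * q n e) ^ 2 =
          (∑ e, (f e xs) ^ 2) + 2 * t n * (∑ e, f e xs * q n e)
            + t n ^ 2 * ∑ e, (q n e) ^ 2 := by
        rw [Finset.mul_sum, Finset.mul_sum, ← Finset.sum_add_distrib, ← Finset.sum_add_distrib]
        refine Finset.sum_congr rfl fun e _ => by ring
      have hineq : t n * (∑ v, b v * d v) ≤
          t n * ((∑ e, f e xs * q n e) + t n / 2 * ∑ e, (q n e) ^ 2) := by
        rw [hbxn] at hm
        nlinarith [hm, hsum, hexpand]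
      exact le_of_mul_le_mul_left hineq (htpos n)
    -- limit of the right-hand side
    have htenrhs : Tendsto (fun k => (∑ e, f e xs * q (ψ k) e)
        + t (ψ k) / 2 * ∑ e, (q (ψ k) e) ^ 2) atTop (𝓝 ((∑ e, f e xs * Q e) + 0)) := by
      refine Tendsto.add ?_ ?_
      · exact tendsto_finset_sum _ fun e _ => (tendsto_const_nhds.mul (htenq e))
      · have h1 : Tendsto (fun k => t (ψ k) / 2) atTop (𝓝 0) := by
          simpa using htent.div_const 2
        have h2 : Tendsto (fun k => ∑ e, (q (ψ k) e) ^ 2) atTop (𝓝 (∑ e, (Q e) ^ 2)) :=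
          tendsto_finset_sum _ fun e _ => (htenq e).pow 2
        simpa using h1.mul h2
    have hbd : ∑ v, b v * d v ≤ ∑ e, f e xs * Q e := by
      have := ge_of_tendsto' htenrhs (fun k => hkey (ψ k))
      simpa using this
    -- the limit point lies in the argmax sets
    have hwlA : ∀ e, wl e ∈ A e := by
      intro e
      have hwlB : wl e ∈ B e := hwl e (Set.mem_univ e)
      refine ⟨hwlB, le_antisymm (hub e xs _ hwlB) ?_⟩
      obtain ⟨ae, haeB, haef⟩ := hex e xs
      set r : ℝ := ∑ v, d v * ae v with hrdef
      have hlower : ∀ n, f e xs + t n * (r - q n e) ≤ ∑ v, xs v * wseq n e v := by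
        intro n
        have h1 : ∑ v, xn n v * ae v ≤ f e (xn n) := hub e (xn n) ae haeB
        rw [hdecomp n ae, ← haef] at h1
        have h2 : f e (xn n) = (∑ v, xs v * wseq n e v) + t n * q n e := by
          rw [hwseqf n e, hdecomp n (wseq n e)]
        rw [h2] at h1
        simp only [hrdef]
        linarith
      have htenrhs2 : Tendsto (fun k => f e xs + t (ψ k) * (r - q (ψ k) e)) atTop
          (𝓝 (f e xs + 0 * (r - Q e))) :=
        tendsto_const_nhds.add (htent.mul (tendsto_const_nhds.sub (htenq e)))
      have := le_of_tendsto_of_tendsto' htenrhs2 (htenxs e) (fun k => hlower (ψ k))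
      simpa using this
    -- contradiction
    have hyK : τ wl ∈ K := ⟨wl, fun e _ => hwlA e, rfl⟩
    have hφy : φ (τ wl) = ∑ e, f e xs * Q e := by
      rw [hrep]
      simp only [hτdef, hQdef]
      have h1 : ∀ v : V, (∑ e, f e xs * wl e v) * d v = ∑ e, f e xs * (d v * wl e v) := by
        intro v; rw [Finset.sum_mul]; exact Finset.sum_congr rfl fun e _ => by ring
      simp only [h1]
      rw [Finset.sum_comm]
      exact Finset.sum_congr rfl fun e _ => (Finset.mul_sum _ _ _).symm
    have hφb : φ b = ∑ v, b v * d v := hrep b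
    have h1 := hKu _ hyK
    rw [hφy] at h1
    rw [hφb] at hbu
    linarith
  -- unpack
  obtain ⟨w, hwP, hwτ⟩ := hbK
  refine ⟨w, fun e => ?_, fun v => ?_⟩
  · have := hwP e (Set.mem_univ e)
    exact ⟨this.1, this.2⟩
  · exact congrFun hwτ v
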